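/- A finite-dimensional G-graded K-algebra A is σ-graded Frobenius (i.e., A* ≅ A(σ) as graded left A-modules) if and only if there exists a family of scalars α = (α_ℓ)_{ℓ∈J_σ} such that the σ-paratrophic matrix P(σ,α) is invertible. -/

import Mathlib

open Finset

/-- **Proposition B.**  A finite-dimensional `G`-graded algebra `A` is σ-graded Frobenius
(`A* ≅ A(σ)` as graded left `A`-modules, unfolded: there is a `K`-linear equivalence
`φ : A ≃ Aᵏ` which is left `A`-linear for the action `(a ⇀ f)(y) = f(y·a)` and which maps
`A(σ)_g = 𝒜 (g·σ)` into `(A*)_g = {f | f(𝒜 h) = 0 for h ≠ g⁻¹}`) if and only if some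
σ-paratrophic matrix `P(σ,α)` is invertible. -/
theorem stmt4 (K : Type) [Field K] (G : Type) [Group G] [DecidableEq G]
    (A : Type) [Ring A] [Algebra K A] (𝒜 : G → Submodule K A)
    (h_one : (1 : A) ∈ 𝒜 1)
    (h_mul : ∀ {g h : G} {a b : A}, a ∈ 𝒜 g → b ∈ 𝒜 h → a * b ∈ 𝒜 (g * h))
    (J : Type) [Fintype J] [DecidableEq J]
    (deg : J → G) (e : Module.Basis J K A)
    (h𝒜 : ∀ g : G, 𝒜 g = Submodule.span K (e '' {i | deg i = g}))
    (σ : G)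
    (c : J → J → J → K) (hc : ∀ i j ℓ, c i j ℓ = e.repr (e i * e j) ℓ) :
    (∃ φ : A ≃ₗ[K] Module.Dual K A,
        (∀ a x y : A, φ (a * x) y = φ x (y * a)) ∧
        (∀ g : G, ∀ x ∈ 𝒜 (g * σ), ∀ h : G, h ≠ g⁻¹ → ∀ y ∈ 𝒜 h, φ x y = 0)) ↔
    (∃ α : J → K,
        IsUnit (Matrix.of fun i j : J =>
          ∑ ℓ ∈ univ.filter (fun ℓ => deg ℓ = σ), α ℓ * c i j ℓ)) := by
  have hsupp : ∀ {g : G} {x : A}, x ∈ 𝒜 g → ∀ i : J, deg i ≠ g → e.repr x i = 0 := by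
    intro g x hx i hi
    rw [h𝒜, Module.Basis.mem_span_image] at hx
    by_contra h
    exact hi (hx (Finsupp.mem_support_iff.mpr h))
  have hmem : ∀ ℓ : J, e ℓ ∈ 𝒜 (deg ℓ) := by
    intro ℓ
    rw [h𝒜]
    exact Submodule.subset_span ⟨ℓ, rfl, rfl⟩
  constructor
  · rintro ⟨φ, hφA, hφg⟩
    set f := φ 1 with hf
    have hf0 : ∀ ℓ : J, deg ℓ ≠ σ → f (e ℓ) = 0 := by
      intro ℓ hℓ
      have h1 : (1:A) ∈ 𝒜 (σ⁻¹ * σ) := by simpa using h_one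
      exact hφg σ⁻¹ 1 h1 (deg ℓ) (by simpa using hℓ) (e ℓ) (hmem ℓ)
    have hφ1 : ∀ a y : A, φ a y = f (y * a) := by
      intro a y
      have := hφA a 1 y
      simpa using this
    refine ⟨fun ℓ => f (e ℓ), ?_⟩
    have hmat : (Matrix.of fun i j : J =>
          ∑ ℓ ∈ univ.filter (fun ℓ => deg ℓ = σ), f (e ℓ) * c i j ℓ)
        = LinearMap.toMatrix e e.dualBasis φ.toLinearMap := by
      ext i j
      rw [LinearMap.toMatrix_apply, Module.Basis.dualBasis_repr, Matrix.of_apply]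
      rw [LinearEquiv.coe_coe, hφ1]
      conv_rhs => rw [← Module.Basis.sum_repr e (e i * e j)]
      rw [map_sum]
      rw [Finset.sum_filter]
      apply Finset.sum_congr rfl
      intro ℓ _
      rw [map_smul, smul_eq_mul, ← hc]
      by_cases hd : deg ℓ = σ
      · simp [hd, mul_comm]
      · simp [hd, hf0 ℓ hd]
    rw [hmat]
    have h1 : LinearMap.toMatrix e e.dualBasis φ.toLinearMap *
        LinearMap.toMatrix e.dualBasis e φ.symm.toLinearMap = 1 := by
      rw [← LinearMap.toMatrix_comp e.dualBasis e e.dualBasis,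
        show φ.toLinearMap.comp φ.symm.toLinearMap = LinearMap.id from by ext x; simp,
        LinearMap.toMatrix_id]
    have h2 : LinearMap.toMatrix e.dualBasis e φ.symm.toLinearMap *
        LinearMap.toMatrix e e.dualBasis φ.toLinearMap = 1 := by
      rw [← LinearMap.toMatrix_comp e e.dualBasis e,
        show φ.symm.toLinearMap.comp φ.toLinearMap = LinearMap.id from by ext x; simp,
        LinearMap.toMatrix_id]
    exact ⟨⟨_, _, h1, h2⟩, rfl⟩
  · rintro ⟨α, hα⟩
    set f : Module.Dual K A := ∑ ℓ ∈ univ.filter (fun ℓ => deg ℓ = σ), α ℓ • e.coord ℓ with hfdef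
    have hfx : ∀ x : A, f x = ∑ ℓ ∈ univ.filter (fun ℓ => deg ℓ = σ), α ℓ * e.repr x ℓ := by
      intro x
      rw [hfdef]
      simp [Module.Basis.coord_apply]
    have hf0 : ∀ {g : G} {x : A}, g ≠ σ → x ∈ 𝒜 g → f x = 0 := by
      intro g x hg hx
      rw [hfx]
      apply Finset.sum_eq_zero
      intro ℓ hℓ
      rw [Finset.mem_filter] at hℓ
      rw [hsupp hx ℓ (hℓ.2.trans_ne (Ne.symm hg))]
      ring
    set ψ : A →ₗ[K] Module.Dual K A := LinearMap.mk₂ K (fun a y => f (y * a))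
      (fun a b y => by show f (y * (a + b)) = f (y * a) + f (y * b); rw [mul_add, map_add])
      (fun s a y => by show f (y * s • a) = s • f (y * a); rw [mul_smul_comm, map_smul])
      (fun a y z => by show f ((y + z) * a) = f (y * a) + f (z * a); rw [add_mul, map_add])
      (fun s a y => by show f (s • y * a) = s • f (y * a); rw [smul_mul_assoc, map_smul]) with hψdef
    have hψ : ∀ a y : A, ψ a y = f (y * a) := fun a y => rfl
    have hmat : LinearMap.toMatrix e e.dualBasis ψ = (Matrix.of fun i j : J =>
          ∑ ℓ ∈ univ.filter (fun ℓ => deg ℓ = σ), α ℓ * c i j ℓ) := by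
      ext i j
      rw [LinearMap.toMatrix_apply, Module.Basis.dualBasis_repr, Matrix.of_apply, hψ, hfx]
      apply Finset.sum_congr rfl
      intro ℓ _
      rw [hc]
    obtain ⟨u, hu⟩ := hα
    set χ : Module.Dual K A →ₗ[K] A := Matrix.toLin e.dualBasis e (↑u⁻¹) with hχdef
    have hid1 : ψ.comp χ = LinearMap.id := by
      apply (LinearMap.toMatrix e.dualBasis e.dualBasis).injective
      rw [LinearMap.toMatrix_comp e.dualBasis e e.dualBasis, hmat, hχdef,
        LinearMap.toMatrix_toLin, LinearMap.toMatrix_id, ← hu, Units.mul_inv]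
    have hid2 : χ.comp ψ = LinearMap.id := by
      apply (LinearMap.toMatrix e e).injective
      rw [LinearMap.toMatrix_comp e e.dualBasis e, hmat, hχdef,
        LinearMap.toMatrix_toLin, LinearMap.toMatrix_id, ← hu, Units.inv_mul]
    refine ⟨LinearEquiv.ofLinear ψ χ hid1 hid2, ?_, ?_⟩
    · intro a x y
      simp only [LinearEquiv.ofLinear_apply, hψ]
      rw [mul_assoc]
    · intro g x hx h hh y hy
      simp only [LinearEquiv.ofLinear_apply, hψ]
      have : y * x ∈ 𝒜 (h * (g * σ)) := h_mul hy hx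
      apply hf0 _ this
      intro hcon
      apply hh
      rw [← mul_assoc] at hcon
      exact eq_inv_of_mul_eq_one_left (mul_right_cancel (hcon.trans (one_mul σ).symm))
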